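/- Let M be a commutative idempotent monoid acting additively on an abelian group G, F : M → G a function satisfying the chain rule, X_1, …, X_n ∈ M, and G = (V, E) a graph with vertex set V = [n]. Then the following are equivalent: (1) X_1, …, X_n form an F-Markov random field with respect to G; (2) X_{[n]∖W}.F(;_{w∈W} X_w) = 0 for every nonempty W ⊆ [n] such that the atom p_W is disconnected with respect to G. -/

import Mathlib

namespace AMRF
/-- An additive monoid action of a commutative monoid `M` on an abelian group `G`. -/
structure MAction (M G : Type*) [CommMonoid M] [AddCommGroup G] where
  act : M → G → G
  act_one : ∀ g, act 1 g = g
  act_mul : ∀ X Y g, act X (act Y g) = act (X * Y) g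
  act_add : ∀ X g h, act X (g + h) = act X g + act X h

variable {M G : Type*} [CommMonoid M] [AddCommGroup G]

/-- `F : M → G` satisfies the chain rule `F(XY) = F(X) + X.F(Y)`. -/
def ChainRule (A : MAction M G) (F : M → G) : Prop :=
  ∀ X Y : M, F (X * Y) = F X + A.act X (F Y)

/-- Higher-order terms on a *reversed* argument list: the head of the list is the *last*
argument `Y_q` in `F_q(Y₁; …; Y_q)`. -/
def Fseq (A : MAction M G) (F : M → G) : List M → G
  | [] => 0
  | [Y] => F Y
  | Y :: Z :: l => Fseq A F (Z :: l) - A.act Y (Fseq A F (Z :: l))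

/-- `Fof A F [Y₁, …, Y_q] = F_q(Y₁; …; Y_q)`, defined inductively by
`F_q(Y₁; …; Y_q) = F_{q−1}(Y₁; …; Y_{q−1}) − Y_q.F_{q−1}(Y₁; …; Y_{q−1})`. -/
def Fof (A : MAction M G) (F : M → G) (l : List M) : G :=
  Fseq A F l.reverse

/-- The interaction term `F(;_{i∈I} X_i)`, with arguments in increasing index order. -/
def Fint (A : MAction M G) (F : M → G) {ι : Type*} [LinearOrder ι] (X : ι → M)
    (I : Finset ι) : G :=
  Fof A F ((I.sort (· ≤ ·)).map X)

/-- The `F`-independence relation: `X ⊥_F Y | Z` iff `Z.F(X; Y) = 0`, where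
`F(X; Y) = F(X) − Y.F(X)` is the second-order term. -/
def Findep (A : MAction M G) (F : M → G) (X Y Z : M) : Prop :=
  A.act Z (F X - A.act Y (F X)) = 0
/-- The graph `G − U`: keep only edges with both endpoints outside `U`. -/
def delGraph {V : Type*} (G : SimpleGraph V) (U : Finset V) : SimpleGraph V where
  Adj a b := G.Adj a b ∧ a ∉ U ∧ b ∉ U
  symm := ⟨fun _ _ h => ⟨h.1.symm, h.2.2, h.2.1⟩⟩
  loopless := ⟨fun a h => G.loopless.1 a h.1⟩

/-- `C` separates `A` from `B` in `G`: every walk from a vertex of `A` to a vertex of `B`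
passes through some vertex of `C`. -/
def Separates {V : Type*} (G : SimpleGraph V) (A B C : Finset V) : Prop :=
  ∀ a ∈ A, ∀ b ∈ B, ∀ w : G.Walk a b, ∃ c ∈ C, c ∈ w.support

/-- `U` is a cutset: `G − U` has more than one connected component. -/
def IsCutset {V : Type*} (G : SimpleGraph V) (U : Finset V) : Prop :=
  ∃ v w : V, v ∉ U ∧ w ∉ U ∧ ¬ (delGraph G U).Reachable v w

/-- `C` is (the vertex set of) a connected component of `G − U`. -/
def IsCompOf {V : Type*} (G : SimpleGraph V) (U C : Finset V) : Prop :=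
  ∃ v, v ∉ U ∧ ∀ w, w ∈ C ↔ (delGraph G U).Reachable v w

section Aux

variable (A : MAction M G) (F : M → G)

theorem act_zero (x : M) : A.act x 0 = 0 := by
  have h : A.act x 0 = A.act x 0 + A.act x 0 := by
    simpa using A.act_add x 0 0
  exact (add_eq_left.mp h.symm)

theorem act_sub (x : M) (g h : G) : A.act x (g - h) = A.act x g - A.act x h := by
  have h2 := A.act_add x (g - h) h
  rw [sub_add_cancel] at h2
  exact eq_sub_of_add_eq h2.symm

theorem act_comm' (x y : M) (g : G) : A.act x (A.act y g) = A.act y (A.act x g) := by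
  rw [A.act_mul, A.act_mul, mul_comm]

theorem F_one (hF : ChainRule A F) : F 1 = 0 := by
  have h := hF 1 1
  rw [one_mul, A.act_one] at h
  exact add_eq_left.mp h.symm

theorem sym2 (hF : ChainRule A F) (x y : M) : F x - A.act y (F x) = F y - A.act x (F y) := by
  have h : F x + A.act x (F y) = F y + A.act y (F x) := by
    rw [← hF x y, mul_comm, hF y x]
  rw [sub_eq_sub_iff_add_eq_add]
  exact h

theorem Fseq_cons (a : M) {l : List M} (hl : l ≠ []) :
    Fseq A F (a :: l) = Fseq A F l - A.act a (Fseq A F l) := by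
  cases l with
  | nil => exact absurd rfl hl
  | cons b t => rfl

theorem Fseq_perm (hF : ChainRule A F) {l₁ l₂ : List M} (h : l₁.Perm l₂) : Fseq A F l₁ = Fseq A F l₂ := by
  induction h with
  | nil => rfl
  | cons x h ih =>
    rename_i l₁ l₂
    rcases eq_or_ne l₁ [] with rfl | hn
    · rw [h.symm.eq_nil]
    · have hn₂ : l₂ ≠ [] := fun e => hn (by simpa using (e ▸ h).eq_nil)
      rw [Fseq_cons A F x hn, Fseq_cons A F x hn₂, ih]
  | swap x y l =>
    cases l with
    | nil =>
      show F x - A.act y (F x) = F y - A.act x (F y)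
      exact sym2 A F hF x y
    | cons z t =>
      show Fseq A F (x :: z :: t) - A.act y (Fseq A F (x :: z :: t))
          = Fseq A F (y :: z :: t) - A.act x (Fseq A F (y :: z :: t))
      have hzt : (z :: t : List M) ≠ [] := by simp
      rw [Fseq_cons A F x hzt, Fseq_cons A F y hzt, act_sub, act_sub,
        act_comm' A y x]
      abel
  | trans _ _ ih1 ih2 => exact ih1.trans ih2

theorem Fof_perm (hF : ChainRule A F) {l₁ l₂ : List M} (h : l₁.Perm l₂) : Fof A F l₁ = Fof A F l₂ :=
  Fseq_perm A F hF ((l₁.reverse_perm).trans (h.trans l₂.reverse_perm.symm))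

theorem Fof_concat (a : M) {l : List M} (hl : l ≠ []) :
    Fof A F (l ++ [a]) = Fof A F l - A.act a (Fof A F l) := by
  unfold Fof
  rw [List.reverse_append]
  show Fseq A F (a :: l.reverse) = _
  rw [Fseq_cons A F a (by simpa using hl)]

variable {ι : Type*} [LinearOrder ι] [DecidableEq ι] (X : ι → M)

theorem Fint_singleton (i : ι) : Fint A F X {i} = F (X i) := by
  unfold Fint
  rw [Finset.sort_singleton]
  rfl

theorem Fint_insert (hF : ChainRule A F) {a : ι} {S : Finset ι} (ha : a ∉ S) (hS : S.Nonempty) :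
    Fint A F X (insert a S) = Fint A F X S - A.act (X a) (Fint A F X S) := by
  have hperm : ((insert a S).sort (· ≤ ·)).Perm (a :: S.sort (· ≤ ·)) :=
    (Finset.sort_perm_toList _ _).trans
      ((Finset.toList_insert ha).trans ((Finset.sort_perm_toList _ _).symm.cons a))
  have h2 : (((insert a S).sort (· ≤ ·)).map X).Perm ((S.sort (· ≤ ·)).map X ++ [X a]) :=
    (hperm.map X).trans (List.perm_append_singleton _ _).symm
  unfold Fint
  rw [Fof_perm A F hF h2, Fof_concat A F (X a)]
  intro hnil
  rw [List.map_eq_nil_iff] at hnil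
  have := Finset.length_sort (α := ι) (· ≤ ·) (s := S)
  rw [hnil] at this
  simp only [List.length_nil] at this
  exact hS.card_pos.ne' this.symm

theorem Fint_pair (hF : ChainRule A F) {a b : ι} (hab : a ≠ b) :
    Fint A F X {a, b} = F (X a) - A.act (X b) (F (X a)) := by
  have h : ({a, b} : Finset ι) = insert b {a} := by
    rw [Finset.pair_comm]
  rw [h, Fint_insert A F X hF (by simpa using hab.symm) ⟨a, Finset.mem_singleton_self a⟩,
    Fint_singleton]


end Aux

section Atoms

variable {ι : Type*} [Fintype ι] [LinearOrder ι] [DecidableEq ι]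
variable (A : MAction M G) (F : M → G) (X : ι → M)

theorem inter_singleton_nonempty (W : Finset ι) (a : ι) :
    (W ∩ {a}).Nonempty ↔ a ∈ W := by
  simp [Finset.Nonempty]

theorem atom_expand (hF : ChainRule A F) :
    ∀ (k : ℕ) (V C : Finset ι), (Finset.univ \ (V ∪ C)).card = k → V.Nonempty →
    Disjoint V C →
    A.act (∏ c ∈ C, X c) (Fint A F X V)
      = ∑ W ∈ Finset.univ.powerset.filter (fun W => V ⊆ W ∧ Disjoint W C),
          A.act (∏ a ∈ Finset.univ \ W, X a) (Fint A F X W) := by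
  intro k
  induction k with
  | zero =>
    intro V C hcard hV hVC
    have hempty : (Finset.univ \ (V ∪ C)) = ∅ := Finset.card_eq_zero.mp hcard
    have hmem : ∀ x : ι, x ∈ V ∪ C := by
      intro x
      by_contra hxn
      have : x ∈ Finset.univ \ (V ∪ C) := Finset.mem_sdiff.mpr ⟨Finset.mem_univ x, hxn⟩
      rw [hempty] at this
      exact absurd this (Finset.notMem_empty x)
    have hset : Finset.univ.powerset.filter (fun W => V ⊆ W ∧ Disjoint W C) = {V} := by
      ext W
      simp only [Finset.mem_filter, Finset.mem_powerset, Finset.mem_singleton]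
      constructor
      · rintro ⟨-, hVW, hWC⟩
        refine Finset.Subset.antisymm ?_ hVW
        intro x hx
        rcases Finset.mem_union.mp (hmem x) with h | h
        · exact h
        · exact absurd h (Finset.disjoint_left.mp hWC hx)
      · rintro rfl
        exact ⟨Finset.subset_univ _, Finset.Subset.refl _, hVC⟩
    rw [hset, Finset.sum_singleton]
    congr 1
    have huV : Finset.univ \ V = C := by
      ext x
      simp only [Finset.mem_sdiff, Finset.mem_univ, true_and]
      constructor
      · intro hxV
        exact (Finset.mem_union.mp (hmem x)).resolve_left hxV
      · intro hxC
        exact Finset.disjoint_right.mp hVC hxC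
    rw [huV]
  | succ k ih =>
    intro V C hcard hV hVC
    have hne : (Finset.univ \ (V ∪ C)).Nonempty := by
      rw [← Finset.card_pos, hcard]; omega
    obtain ⟨r, hr⟩ := hne
    have hrV : r ∉ V := fun h => (Finset.mem_sdiff.mp hr).2 (Finset.mem_union_left _ h)
    have hrC : r ∉ C := fun h => (Finset.mem_sdiff.mp hr).2 (Finset.mem_union_right _ h)
    have key1 : A.act (∏ c ∈ C, X c) (Fint A F X V)
        = A.act (∏ c ∈ insert r C, X c) (Fint A F X V)
          + A.act (∏ c ∈ C, X c) (Fint A F X (insert r V)) := by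
      rw [Fint_insert A F X hF hrV hV, act_sub, Finset.prod_insert hrC, mul_comm,
        ← A.act_mul]
      abel
    have hins : V ∪ insert r C = insert r (V ∪ C) := by
      ext x
      simp only [Finset.mem_union, Finset.mem_insert]
      tauto
    have hins2 : insert r V ∪ C = insert r (V ∪ C) := by
      ext x
      simp only [Finset.mem_union, Finset.mem_insert]
      tauto
    have hcr : (Finset.univ \ insert r (V ∪ C)).card = k := by
      have h1 : Finset.univ \ insert r (V ∪ C) = (Finset.univ \ (V ∪ C)).erase r := by
        ext x
        simp only [Finset.mem_sdiff, Finset.mem_univ, true_and, Finset.mem_insert,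
          Finset.mem_erase]
        tauto
      rw [h1, Finset.card_erase_of_mem hr, hcard]
      omega
    have hd1 : Disjoint V (insert r C) := Finset.disjoint_insert_right.mpr ⟨hrV, hVC⟩
    have hd2 : Disjoint (insert r V) C := Finset.disjoint_insert_left.mpr ⟨hrC, hVC⟩
    rw [key1, ih V (insert r C) (by rw [hins, hcr]) hV hd1,
      ih (insert r V) C (by rw [hins2, hcr]) (Finset.insert_nonempty r V) hd2,
      ← Finset.sum_filter_add_sum_filter_not
        (Finset.univ.powerset.filter (fun W => V ⊆ W ∧ Disjoint W C)) (fun W => r ∈ W)]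
    have e1 : (Finset.univ.powerset.filter (fun W => V ⊆ W ∧ Disjoint W C)).filter
        (fun W => ¬ r ∈ W)
        = Finset.univ.powerset.filter (fun W => V ⊆ W ∧ Disjoint W (insert r C)) := by
      rw [Finset.filter_filter]
      apply Finset.filter_congr
      intro W _
      simp only [Finset.disjoint_insert_right]
      tauto
    have e2 : (Finset.univ.powerset.filter (fun W => V ⊆ W ∧ Disjoint W C)).filter
        (fun W => r ∈ W)
        = Finset.univ.powerset.filter (fun W => insert r V ⊆ W ∧ Disjoint W C) := by
      rw [Finset.filter_filter]
      apply Finset.filter_congr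
      intro W _
      simp only [Finset.insert_subset_iff]
      tauto
    rw [e1, e2]
    exact (add_comm _ _)


theorem sum_extract {α : Type*} {s : Finset α} {f : α → G} {a : α} [DecidableEq α]
    (ha : a ∈ s) (hz : ∀ b ∈ s.erase a, f b = 0) (h0 : ∑ x ∈ s, f x = 0) : f a = 0 := by
  rw [← Finset.add_sum_erase s f ha, Finset.sum_eq_zero hz, add_zero] at h0
  exact h0

theorem inter_erase_nonempty {W As : Finset ι} {a : ι} (haW : a ∉ W) :
    (W ∩ As.erase a).Nonempty ↔ (W ∩ As).Nonempty := by
  constructor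
  · rintro ⟨x, hx⟩
    exact ⟨x, Finset.mem_inter.mpr ⟨(Finset.mem_inter.mp hx).1,
      Finset.mem_of_mem_erase (Finset.mem_inter.mp hx).2⟩⟩
  · rintro ⟨x, hx⟩
    obtain ⟨hxW, hxA⟩ := Finset.mem_inter.mp hx
    exact ⟨x, Finset.mem_inter.mpr ⟨hxW, Finset.mem_erase.mpr ⟨fun h => haW (h ▸ hxW), hxA⟩⟩⟩

theorem erase_nonempty_of_not_singleton {As : Finset ι} {a : ι} (ha : a ∈ As)
    (h1 : ¬ ∃ x, As = {x}) : (As.erase a).Nonempty := by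
  rw [Finset.nonempty_iff_ne_empty]
  intro he
  apply h1
  refine ⟨a, ?_⟩
  apply Finset.Subset.antisymm
  · intro x hx
    rcases eq_or_ne x a with rfl | hxa
    · exact Finset.mem_singleton_self x
    · exact absurd (Finset.mem_erase.mpr ⟨hxa, hx⟩) (by rw [he]; exact Finset.notMem_empty x)
  · intro x hx
    rw [Finset.mem_singleton] at hx
    exact hx ▸ ha

theorem key_decomp (hF : ChainRule A F) :
    ∀ (k : ℕ) (As Bs Cs : Finset ι), As.card + Bs.card ≤ k → Disjoint As Bs →
    Disjoint As Cs → Disjoint Bs Cs →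
    A.act (∏ c ∈ Cs, X c)
        (F (∏ a ∈ As, X a) - A.act (∏ b ∈ Bs, X b) (F (∏ a ∈ As, X a)))
      = ∑ W ∈ Finset.univ.powerset.filter
            (fun W => (W ∩ As).Nonempty ∧ (W ∩ Bs).Nonempty ∧ Disjoint W Cs),
          A.act (∏ a ∈ Finset.univ \ W, X a) (Fint A F X W) := by
  have hemptyA : ∀ (Bs Cs : Finset ι),
      A.act (∏ c ∈ Cs, X c)
          (F (∏ a ∈ (∅ : Finset ι), X a) - A.act (∏ b ∈ Bs, X b) (F (∏ a ∈ (∅ : Finset ι), X a)))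
        = ∑ W ∈ Finset.univ.powerset.filter
              (fun W => (W ∩ (∅ : Finset ι)).Nonempty ∧ (W ∩ Bs).Nonempty ∧ Disjoint W Cs),
            A.act (∏ a ∈ Finset.univ \ W, X a) (Fint A F X W) := by
    intro Bs Cs
    rw [Finset.prod_empty, F_one A F hF, act_zero, sub_zero, act_zero,
      Finset.filter_false_of_mem, Finset.sum_empty]
    rintro W - ⟨h1, -, -⟩
    simp at h1
  intro k
  induction k with
  | zero =>
    intro As Bs Cs hk hAB hAC hBC
    have : As = ∅ := Finset.card_eq_zero.mp (by omega)
    subst this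
    exact hemptyA Bs Cs
  | succ k ih =>
    intro As Bs Cs hk hAB hAC hBC
    rcases As.eq_empty_or_nonempty with rfl | hA
    · exact hemptyA Bs Cs
    rcases Bs.eq_empty_or_nonempty with rfl | hB
    · rw [Finset.prod_empty, A.act_one, sub_self, act_zero,
        Finset.filter_false_of_mem, Finset.sum_empty]
      rintro W - ⟨-, h2, -⟩
      simp at h2
    by_cases hA1 : ∃ x, As = {x}
    · by_cases hB1 : ∃ x, Bs = {x}
      · -- base case: both singletons
        obtain ⟨a, rfl⟩ := hA1
        obtain ⟨b, rfl⟩ := hB1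
        have hab : a ≠ b := by
          intro h
          subst h
          simp at hAB
        have hVC : Disjoint ({a, b} : Finset ι) Cs := by
          rw [Finset.disjoint_left]
          intro x hx
          rcases Finset.mem_insert.mp hx with rfl | hx
          · exact Finset.disjoint_left.mp hAC (Finset.mem_singleton_self x)
          · rw [Finset.mem_singleton] at hx
            exact hx ▸ Finset.disjoint_left.mp hBC (Finset.mem_singleton_self b)
        rw [Finset.prod_singleton, Finset.prod_singleton, ← Fint_pair A F X hF hab,
          atom_expand A F X hF ((Finset.univ \ ({a, b} ∪ Cs)).card) {a, b} Cs rfl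
            ⟨a, by simp⟩ hVC]
        apply Finset.sum_congr _ (fun _ _ => rfl)
        apply Finset.filter_congr
        intro W _
        simp only [Finset.insert_subset_iff, Finset.singleton_subset_iff,
          inter_singleton_nonempty]
        tauto
      · -- split Bs
        obtain ⟨b, hb⟩ := hB
        have hbe : (Bs.erase b).Nonempty := erase_nonempty_of_not_singleton hb hB1
        have hcard2 : 2 ≤ Bs.card := by
          have h1 := Finset.card_erase_of_mem hb
          have h2 := hbe.card_pos
          omega
        have hbC : b ∉ Cs := Finset.disjoint_left.mp hBC hb
        have hPB : (∏ x ∈ Bs, X x) = X b * ∏ x ∈ Bs.erase b, X x :=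
          (Finset.mul_prod_erase Bs X hb).symm
        have e : F (∏ a ∈ As, X a) - A.act (∏ b ∈ Bs, X b) (F (∏ a ∈ As, X a))
            = (F (∏ a ∈ As, X a) - A.act (X b) (F (∏ a ∈ As, X a)))
              + A.act (X b) (F (∏ a ∈ As, X a)
                  - A.act (∏ x ∈ Bs.erase b, X x) (F (∏ a ∈ As, X a))) := by
          rw [hPB, ← A.act_mul, act_sub]
          abel
        rw [e, A.act_add]
        have e2 : A.act (∏ c ∈ Cs, X c) (A.act (X b) (F (∏ a ∈ As, X a)
              - A.act (∏ x ∈ Bs.erase b, X x) (F (∏ a ∈ As, X a))))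
            = A.act (∏ c ∈ insert b Cs, X c) (F (∏ a ∈ As, X a)
              - A.act (∏ x ∈ Bs.erase b, X x) (F (∏ a ∈ As, X a))) := by
          rw [A.act_mul, Finset.prod_insert hbC, mul_comm]
        have hd1 : Disjoint As ({b} : Finset ι) := by
          rw [Finset.disjoint_singleton_right]
          exact Finset.disjoint_right.mp hAB hb
        have hd2 : Disjoint ({b} : Finset ι) Cs := by
          rw [Finset.disjoint_singleton_left]
          exact hbC
        have hd3 : Disjoint As (Bs.erase b) := hAB.mono_right (Finset.erase_subset b Bs)
        have hd4 : Disjoint As (insert b Cs) :=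
          Finset.disjoint_insert_right.mpr ⟨Finset.disjoint_right.mp hAB hb, hAC⟩
        have hd5 : Disjoint (Bs.erase b) (insert b Cs) :=
          Finset.disjoint_insert_right.mpr ⟨Finset.notMem_erase b Bs,
            hBC.mono_left (Finset.erase_subset b Bs)⟩
        have hk1 : As.card + ({b} : Finset ι).card ≤ k := by
          rw [Finset.card_singleton]
          omega
        have hk2 : As.card + (Bs.erase b).card ≤ k := by
          rw [Finset.card_erase_of_mem hb]
          omega
        rw [e2, ← Finset.prod_singleton (f := X) (a := b),
          ih As {b} Cs hk1 hd1 hAC hd2,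
          ih As (Bs.erase b) (insert b Cs) hk2 hd3 hd4 hd5,
          ← Finset.sum_filter_add_sum_filter_not
            (Finset.univ.powerset.filter
              (fun W => (W ∩ As).Nonempty ∧ (W ∩ Bs).Nonempty ∧ Disjoint W Cs))
            (fun W => b ∈ W)]
        have e3 : (Finset.univ.powerset.filter
              (fun W => (W ∩ As).Nonempty ∧ (W ∩ Bs).Nonempty ∧ Disjoint W Cs)).filter
              (fun W => b ∈ W)
            = Finset.univ.powerset.filter
              (fun W => (W ∩ As).Nonempty ∧ (W ∩ ({b} : Finset ι)).Nonempty ∧ Disjoint W Cs) := by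
          rw [Finset.filter_filter]
          apply Finset.filter_congr
          intro W _
          rw [inter_singleton_nonempty]
          constructor
          · rintro ⟨⟨h1, h2, h3⟩, h4⟩
            exact ⟨h1, h4, h3⟩
          · rintro ⟨h1, h2, h3⟩
            exact ⟨⟨h1, ⟨b, Finset.mem_inter.mpr ⟨h2, hb⟩⟩, h3⟩, h2⟩
        have e4 : (Finset.univ.powerset.filter
              (fun W => (W ∩ As).Nonempty ∧ (W ∩ Bs).Nonempty ∧ Disjoint W Cs)).filter
              (fun W => ¬ b ∈ W)
            = Finset.univ.powerset.filter
              (fun W => (W ∩ As).Nonempty ∧ (W ∩ Bs.erase b).Nonempty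
                ∧ Disjoint W (insert b Cs)) := by
          rw [Finset.filter_filter]
          apply Finset.filter_congr
          intro W _
          simp only [Finset.disjoint_insert_right]
          constructor
          · rintro ⟨⟨h1, h2, h3⟩, h4⟩
            exact ⟨h1, (inter_erase_nonempty h4).mpr h2, h4, h3⟩
          · rintro ⟨h1, h2, h4, h3⟩
            exact ⟨⟨h1, (inter_erase_nonempty h4).mp h2, h3⟩, h4⟩
        rw [e3, e4]
    · -- split As
      obtain ⟨a, ha⟩ := hA
      have hae : (As.erase a).Nonempty := erase_nonempty_of_not_singleton ha hA1
      have hcard2 : 2 ≤ As.card := by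
        have h1 := Finset.card_erase_of_mem ha
        have h2 := hae.card_pos
        omega
      have haC : a ∉ Cs := Finset.disjoint_left.mp hAC ha
      have hPA : (∏ x ∈ As, X x) = X a * ∏ x ∈ As.erase a, X x :=
        (Finset.mul_prod_erase As X ha).symm
      have e : F (∏ a ∈ As, X a) - A.act (∏ b ∈ Bs, X b) (F (∏ a ∈ As, X a))
          = (F (X a) - A.act (∏ b ∈ Bs, X b) (F (X a)))
            + A.act (X a) (F (∏ x ∈ As.erase a, X x)
                - A.act (∏ b ∈ Bs, X b) (F (∏ x ∈ As.erase a, X x))) := by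
        rw [hPA, hF (X a), A.act_add, act_sub,
          act_comm' A (∏ b ∈ Bs, X b) (X a)]
        abel
      rw [e, A.act_add]
      have e2 : A.act (∏ c ∈ Cs, X c) (A.act (X a) (F (∏ x ∈ As.erase a, X x)
            - A.act (∏ b ∈ Bs, X b) (F (∏ x ∈ As.erase a, X x))))
          = A.act (∏ c ∈ insert a Cs, X c) (F (∏ x ∈ As.erase a, X x)
            - A.act (∏ b ∈ Bs, X b) (F (∏ x ∈ As.erase a, X x))) := by
        rw [A.act_mul, Finset.prod_insert haC, mul_comm]
      have hd1 : Disjoint ({a} : Finset ι) Bs := by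
        rw [Finset.disjoint_singleton_left]
        exact Finset.disjoint_left.mp hAB ha
      have hd2 : Disjoint ({a} : Finset ι) Cs := by
        rw [Finset.disjoint_singleton_left]
        exact haC
      have hd3 : Disjoint (As.erase a) Bs := hAB.mono_left (Finset.erase_subset a As)
      have hd4 : Disjoint (As.erase a) (insert a Cs) :=
        Finset.disjoint_insert_right.mpr ⟨Finset.notMem_erase a As,
          hAC.mono_left (Finset.erase_subset a As)⟩
      have hd5 : Disjoint Bs (insert a Cs) :=
        Finset.disjoint_insert_right.mpr ⟨Finset.disjoint_left.mp hAB ha, hBC⟩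
      have hk1 : ({a} : Finset ι).card + Bs.card ≤ k := by
        rw [Finset.card_singleton]
        omega
      have hk2 : (As.erase a).card + Bs.card ≤ k := by
        rw [Finset.card_erase_of_mem ha]
        omega
      rw [e2, ← Finset.prod_singleton (f := X) (a := a),
        ih {a} Bs Cs hk1 hd1 hd2 hBC,
        ih (As.erase a) Bs (insert a Cs) hk2 hd3 hd4 hd5,
        ← Finset.sum_filter_add_sum_filter_not
          (Finset.univ.powerset.filter
            (fun W => (W ∩ As).Nonempty ∧ (W ∩ Bs).Nonempty ∧ Disjoint W Cs))
          (fun W => a ∈ W)]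
      have e3 : (Finset.univ.powerset.filter
            (fun W => (W ∩ As).Nonempty ∧ (W ∩ Bs).Nonempty ∧ Disjoint W Cs)).filter
            (fun W => a ∈ W)
          = Finset.univ.powerset.filter
            (fun W => (W ∩ ({a} : Finset ι)).Nonempty ∧ (W ∩ Bs).Nonempty ∧ Disjoint W Cs) := by
        rw [Finset.filter_filter]
        apply Finset.filter_congr
        intro W _
        rw [inter_singleton_nonempty]
        constructor
        · rintro ⟨⟨h1, h2, h3⟩, h4⟩
          exact ⟨h4, h2, h3⟩
        · rintro ⟨h1, h2, h3⟩
          exact ⟨⟨⟨a, Finset.mem_inter.mpr ⟨h1, ha⟩⟩, h2, h3⟩, h1⟩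
      have e4 : (Finset.univ.powerset.filter
            (fun W => (W ∩ As).Nonempty ∧ (W ∩ Bs).Nonempty ∧ Disjoint W Cs)).filter
            (fun W => ¬ a ∈ W)
          = Finset.univ.powerset.filter
            (fun W => (W ∩ As.erase a).Nonempty ∧ (W ∩ Bs).Nonempty
              ∧ Disjoint W (insert a Cs)) := by
        rw [Finset.filter_filter]
        apply Finset.filter_congr
        intro W _
        simp only [Finset.disjoint_insert_right]
        constructor
        · rintro ⟨⟨h1, h2, h3⟩, h4⟩
          exact ⟨(inter_erase_nonempty h4).mpr h1, h2, h4, h3⟩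
        · rintro ⟨h1, h2, h4, h3⟩
          exact ⟨⟨(inter_erase_nonempty h4).mp h1, h2, h3⟩, h4⟩
      rw [e3, e4]

end Atoms

section Graph

theorem delWalk_exists {V : Type*} {Gr : SimpleGraph V} {U : Finset V} {u v : V}
    (p : (delGraph Gr U).Walk u v) : ∃ q : Gr.Walk u v, q.support = p.support := by
  induction p with
  | nil => exact ⟨SimpleGraph.Walk.nil, rfl⟩
  | cons h _ ih =>
    obtain ⟨q, hq⟩ := ih
    exact ⟨SimpleGraph.Walk.cons h.1 q, by
      rw [SimpleGraph.Walk.support_cons, SimpleGraph.Walk.support_cons, hq]⟩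

theorem delWalk_support {V : Type*} {Gr : SimpleGraph V} {U : Finset V} :
    ∀ {u v : V} (p : (delGraph Gr U).Walk u v), u ∉ U → ∀ x ∈ p.support, x ∉ U := by
  intro u v p
  induction p with
  | nil =>
    intro hu x hx
    rw [SimpleGraph.Walk.support_nil, List.mem_singleton] at hx
    exact hx ▸ hu
  | cons h _ ih =>
    intro _ x hx
    rw [SimpleGraph.Walk.support_cons, List.mem_cons] at hx
    rcases hx with rfl | hx
    · exact h.2.1
    · exact ih h.2.2 x hx

theorem reachable_of_support {V : Type*} {Gr : SimpleGraph V} {U : Finset V} :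
    ∀ {u v : V} (p : Gr.Walk u v), (∀ x ∈ p.support, x ∉ U) →
      (delGraph Gr U).Reachable u v := by
  intro u v p
  induction p with
  | nil => exact fun _ => SimpleGraph.Reachable.refl _
  | cons h p ih =>
    rename_i u' w' v'
    intro hs
    have hu : u' ∉ U := hs u' (SimpleGraph.Walk.start_mem_support _)
    have hw : w' ∉ U := hs w' (by
      rw [SimpleGraph.Walk.support_cons]
      exact List.mem_cons_of_mem _ (SimpleGraph.Walk.start_mem_support p))
    have hadj : (delGraph Gr U).Adj u' w' := ⟨h, hu, hw⟩
    exact hadj.reachable.trans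
      (ih fun x hx => hs x (by
        rw [SimpleGraph.Walk.support_cons]
        exact List.mem_cons_of_mem _ hx))

end Graph

/-- The global Markov property: `X₁, …, X_n` form a Markov random field with respect to the
independence relation `ind` and the graph `Gr`. -/
def IsMRF {M : Type*} [CommMonoid M] {n : ℕ} (ind : M → M → M → Prop)
    (Gr : SimpleGraph (Fin n)) (X : Fin n → M) : Prop :=
  ∀ A B C : Finset (Fin n), Disjoint A B → Disjoint A C → Disjoint B C →
    Separates Gr A B C →
    ind (∏ a ∈ A, X a) (∏ b ∈ B, X b) (∏ c ∈ C, X c)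

/-- `X₁, …, X_n` form an `F`-Markov random field with respect to the graph
`Gr` on `[n]` if and only if `X_{[n]∖W}.F(;_{w∈W} X_w) = 0` for every nonempty `W ⊆ [n]`
whose atom `p_W` is disconnected with respect to `Gr` (i.e. `[n] ∖ W` is a cutset). -/
theorem F_mrf_characterization
    {M G : Type*} [CommMonoid M] [AddCommGroup G]
    (hidem : ∀ x : M, x * x = x)
    (A : MAction M G) (F : M → G) (hF : ChainRule A F)
    (n : ℕ) (X : Fin n → M) (Gr : SimpleGraph (Fin n)) :
    IsMRF (Findep A F) Gr X ↔
      ∀ W : Finset (Fin n), W.Nonempty → IsCutset Gr (Finset.univ \ W) →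
        A.act (∏ a ∈ Finset.univ \ W, X a) (Fint A F X W) = 0 := by
  constructor
  · -- MRF implies vanishing of disconnected atoms
    intro hmrf
    suffices H : ∀ (k : ℕ) (W : Finset (Fin n)), W.card ≤ k → W.Nonempty →
        IsCutset Gr (Finset.univ \ W) →
        A.act (∏ a ∈ Finset.univ \ W, X a) (Fint A F X W) = 0 by
      intro W hW hcut
      exact H W.card W le_rfl hW hcut
    intro k
    induction k with
    | zero =>
      intro W hk hW _
      exact absurd (Finset.card_eq_zero.mp (Nat.le_zero.mp hk)) hW.ne_empty
    | succ k ih =>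
      intro W hk hW hcut
      obtain ⟨v, w, hv, hw, hnr⟩ := hcut
      haveI : DecidablePred (fun x => (delGraph Gr (Finset.univ \ W)).Reachable v x) :=
        fun _ => Classical.propDecidable _
      have hvW : v ∈ W := by
        by_contra h
        exact hv (Finset.mem_sdiff.mpr ⟨Finset.mem_univ v, h⟩)
      have hwW : w ∈ W := by
        by_contra h
        exact hw (Finset.mem_sdiff.mpr ⟨Finset.mem_univ w, h⟩)
      have hAsub : W.filter (fun x => (delGraph Gr (Finset.univ \ W)).Reachable v x) ⊆ W :=
        Finset.filter_subset _ _
      have hvA : v ∈ W.filter (fun x => (delGraph Gr (Finset.univ \ W)).Reachable v x) :=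
        Finset.mem_filter.mpr ⟨hvW, SimpleGraph.Reachable.refl v⟩
      have hwB : w ∈ W \ W.filter (fun x => (delGraph Gr (Finset.univ \ W)).Reachable v x) :=
        Finset.mem_sdiff.mpr ⟨hwW, fun h => hnr (Finset.mem_filter.mp h).2⟩
      have hAB : Disjoint (W.filter (fun x => (delGraph Gr (Finset.univ \ W)).Reachable v x))
          (W \ W.filter (fun x => (delGraph Gr (Finset.univ \ W)).Reachable v x)) :=
        Finset.disjoint_sdiff
      have hAC : Disjoint (W.filter (fun x => (delGraph Gr (Finset.univ \ W)).Reachable v x))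
          (Finset.univ \ W) := by
        rw [Finset.disjoint_right]
        intro x hx hx2
        exact (Finset.mem_sdiff.mp hx).2 (hAsub hx2)
      have hBC : Disjoint (W \ W.filter (fun x => (delGraph Gr (Finset.univ \ W)).Reachable v x))
          (Finset.univ \ W) := by
        rw [Finset.disjoint_right]
        intro x hx hx2
        exact (Finset.mem_sdiff.mp hx).2 (Finset.mem_sdiff.mp hx2).1
      have hsep : Separates Gr
          (W.filter (fun x => (delGraph Gr (Finset.univ \ W)).Reachable v x))
          (W \ W.filter (fun x => (delGraph Gr (Finset.univ \ W)).Reachable v x))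
          (Finset.univ \ W) := by
        intro a haA b hbB p
        by_contra hc
        push_neg at hc
        have hsup : ∀ x ∈ p.support, x ∉ Finset.univ \ W := fun x hx hxC => hc x hxC hx
        have hreach := reachable_of_support p hsup
        exact (Finset.mem_sdiff.mp hbB).2 (Finset.mem_filter.mpr
          ⟨(Finset.mem_sdiff.mp hbB).1, ((Finset.mem_filter.mp haA).2.trans hreach)⟩)
      have h0 := hmrf _ _ _ hAB hAC hBC hsep
      unfold Findep at h0
      rw [key_decomp A F X hF (_ + _) _ _ _ le_rfl hAB hAC hBC] at h0
      have hWmem : W ∈ Finset.univ.powerset.filter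
          (fun W' => (W' ∩ W.filter (fun x => (delGraph Gr (Finset.univ \ W)).Reachable v x)).Nonempty ∧
            (W' ∩ (W \ W.filter (fun x => (delGraph Gr (Finset.univ \ W)).Reachable v x))).Nonempty ∧
            Disjoint W' (Finset.univ \ W)) := by
        refine Finset.mem_filter.mpr ⟨Finset.mem_powerset.mpr (Finset.subset_univ W),
          ⟨v, Finset.mem_inter.mpr ⟨hvW, hvA⟩⟩, ⟨w, Finset.mem_inter.mpr ⟨hwW, hwB⟩⟩, ?_⟩
        rw [Finset.disjoint_right]
        intro x hx
        exact fun hx2 => (Finset.mem_sdiff.mp hx).2 hx2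
      have hz : ∀ W' ∈ (Finset.univ.powerset.filter
          (fun W' => (W' ∩ W.filter (fun x => (delGraph Gr (Finset.univ \ W)).Reachable v x)).Nonempty ∧
            (W' ∩ (W \ W.filter (fun x => (delGraph Gr (Finset.univ \ W)).Reachable v x))).Nonempty ∧
            Disjoint W' (Finset.univ \ W))).erase W,
          A.act (∏ a ∈ Finset.univ \ W', X a) (Fint A F X W') = 0 := by
        intro W' hW'
        obtain ⟨hne, hmem⟩ := Finset.mem_erase.mp hW'
        obtain ⟨-, hWA, hWB, hWC⟩ := Finset.mem_filter.mp hmem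
        obtain ⟨a, haI⟩ := hWA
        obtain ⟨b, hbI⟩ := hWB
        obtain ⟨haW', haA⟩ := Finset.mem_inter.mp haI
        obtain ⟨hbW', hbB⟩ := Finset.mem_inter.mp hbI
        have hsub : W' ⊆ W := by
          intro x hx
          by_contra hxW
          exact Finset.disjoint_left.mp hWC hx (Finset.mem_sdiff.mpr ⟨Finset.mem_univ x, hxW⟩)
        have hlt : W'.card < W.card :=
          Finset.card_lt_card (Finset.ssubset_iff_subset_ne.mpr ⟨hsub, hne⟩)
        have hklt : W'.card ≤ k := by omega
        apply ih W' hklt ⟨a, haW'⟩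
        refine ⟨a, b, ?_, ?_, ?_⟩
        · simp [Finset.mem_sdiff, haW']
        · simp [Finset.mem_sdiff, hbW']
        · intro hr
          obtain ⟨p⟩ := hr
          obtain ⟨q, hq⟩ := delWalk_exists p
          have hsupq : ∀ x ∈ q.support, x ∉ Finset.univ \ W := by
            intro x hx
            rw [hq] at hx
            have hx1 : x ∉ Finset.univ \ W' :=
              delWalk_support p (by simp [Finset.mem_sdiff, haW']) x hx
            have hx2 : x ∈ W' := by
              by_contra h
              exact hx1 (Finset.mem_sdiff.mpr ⟨Finset.mem_univ x, h⟩)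
            intro hxC
            exact (Finset.mem_sdiff.mp hxC).2 (hsub hx2)
          have hreach := reachable_of_support q hsupq
          have hvb := ((Finset.mem_filter.mp haA).2).trans hreach
          exact (Finset.mem_sdiff.mp hbB).2
            (Finset.mem_filter.mpr ⟨(Finset.mem_sdiff.mp hbB).1, hvb⟩)
      exact sum_extract
        (f := fun W' => A.act (∏ a ∈ Finset.univ \ W', X a) (Fint A F X W')) hWmem hz h0
  · -- vanishing of disconnected atoms implies MRF
    intro hat As Bs Cs hAB hAC hBC hsep
    show A.act _ _ = 0
    rw [key_decomp A F X hF (As.card + Bs.card) As Bs Cs le_rfl hAB hAC hBC]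
    apply Finset.sum_eq_zero
    intro W hW
    obtain ⟨-, hWA, hWB, hWC⟩ := Finset.mem_filter.mp hW
    obtain ⟨a, haI⟩ := hWA
    obtain ⟨b, hbI⟩ := hWB
    obtain ⟨haW, haA⟩ := Finset.mem_inter.mp haI
    obtain ⟨hbW, hbB⟩ := Finset.mem_inter.mp hbI
    apply hat W ⟨a, haW⟩
    refine ⟨a, b, by simp [Finset.mem_sdiff, haW], by simp [Finset.mem_sdiff, hbW], ?_⟩
    intro hr
    obtain ⟨p⟩ := hr
    obtain ⟨q, hq⟩ := delWalk_exists p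
    obtain ⟨c, hcC, hcs⟩ := hsep a haA b hbB q
    rw [hq] at hcs
    have hc1 : c ∉ Finset.univ \ W := delWalk_support p (by simp [Finset.mem_sdiff, haW]) c hcs
    have hc2 : c ∈ W := by
      by_contra h
      exact hc1 (Finset.mem_sdiff.mpr ⟨Finset.mem_univ c, h⟩)
    exact Finset.disjoint_left.mp hWC hc2 hcC


end AMRF
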